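/- arXiv:1405.0778 — 3 statements merged into one kernel-verified Lean document; each statement's English description precedes it below -/
import Mathlib

section
/- Let p(z) = 1 + Σ_{1≤|α|≤m} a_α z^α be a holomorphic polynomial on ℂ^N (N ≥ 1, multi-index notation) that has no zeros in the open unit ball 𝔹^N. Then there is a constant C̃_m depending only on m such that |a_α| ≤ C̃_m for all 1 ≤ |α| ≤ m. -/
open Polynomial Complex


lemma esymm_card_eq (s : Multiset ℂ) : s.esymm (Multiset.card s) = s.prod := by
  have h1 := Multiset.prod_X_sub_C_coeff s (Nat.zero_le (Multiset.card s))
  rw [Nat.sub_zero] at h1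
  have h2 : ((s.map fun t => X - C t).prod).coeff 0 = (-1)^(Multiset.card s) * s.prod := by
    rw [Polynomial.coeff_zero_eq_eval_zero, Polynomial.eval_multiset_prod, Multiset.map_map]
    simp only [Function.comp, eval_sub, eval_X, eval_C, zero_sub]
    rw [Multiset.prod_map_neg]
  rw [h1] at h2
  exact mul_left_cancel₀ (pow_ne_zero _ (neg_ne_zero.mpr one_ne_zero)) h2

lemma norm_mprod (t : Multiset ℂ) : ‖t.prod‖ = (t.map (fun r => ‖r‖)).prod := by
  induction t using Multiset.induction with
  | empty => simp
  | cons a t ih => simp [norm_mul, ih]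

lemma esymm_norm_le (s : Multiset ℂ) (hs : ∀ r ∈ s, 1 ≤ ‖r‖) (j : ℕ) :
    ‖s.esymm j‖ ≤ ((Multiset.card s).choose j : ℝ) * ((s.map (fun r => ‖r‖)).prod) := by
  have hterm : ∀ t ∈ s.powersetCard j, ‖t.prod‖ ≤ (s.map (fun r => ‖r‖)).prod := by
    intro t ht
    rw [Multiset.mem_powersetCard] at ht
    obtain ⟨hle, _⟩ := ht
    rw [norm_mprod]
    calc (t.map (fun r => ‖r‖)).prod ≤ (t.map (fun r => ‖r‖)).prod * ((s - t).map (fun r => ‖r‖)).prod := by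
          nlinarith [Multiset.prod_nonneg (s := t.map (fun r => ‖r‖)) (fun x hx => by
              obtain ⟨r, _, rfl⟩ := Multiset.mem_map.mp hx; exact norm_nonneg r),
            Multiset.one_le_prod (s := (s - t).map (fun r => ‖r‖)) (fun x hx => by
              obtain ⟨r, hr, rfl⟩ := Multiset.mem_map.mp hx
              exact hs r (Multiset.mem_of_le tsub_le_self hr))]
      _ = (s.map (fun r => ‖r‖)).prod := by
          rw [← Multiset.prod_add, ← Multiset.map_add, add_tsub_cancel_of_le hle]
  unfold Multiset.esymm
  calc ‖((s.powersetCard j).map Multiset.prod).sum‖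
      ≤ (((s.powersetCard j).map Multiset.prod).map (fun x => ‖x‖)).sum := norm_multiset_sum_le _
    _ = ((s.powersetCard j).map (fun t => ‖t.prod‖)).sum := by rw [Multiset.map_map]; rfl
    _ ≤ ((s.powersetCard j).map (fun _ => (s.map (fun r => ‖r‖)).prod)).sum :=
        Multiset.sum_map_le_sum_map _ _ hterm
    _ = ((Multiset.card s).choose j : ℝ) * ((s.map (fun r => ‖r‖)).prod) := by
        rw [Multiset.map_const', Multiset.sum_replicate, Multiset.card_powersetCard, nsmul_eq_mul]

lemma coeff_bound_one_var (q : Polynomial ℂ) (h0 : q.coeff 0 = 1)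
    (hz : ∀ x : ℂ, ‖x‖ ≤ 1 → q.eval x ≠ 0) (k : ℕ) :
    ‖q.coeff k‖ ≤ (q.natDegree.choose k : ℝ) := by
  rcases le_or_gt k q.natDegree with hk | hk
  swap
  · rw [Polynomial.coeff_eq_zero_of_natDegree_lt hk, Nat.choose_eq_zero_of_lt hk]; simp
  set n := q.natDegree with hn
  have hsplit : q.Splits := IsAlgClosed.splits q
  have hcard : Multiset.card q.roots = n := splits_iff_card_roots.mp hsplit
  have hroots : ∀ r ∈ q.roots, 1 ≤ ‖r‖ := by
    intro r hr
    by_contra h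
    exact hz r (le_of_lt (not_le.mp h)) (isRoot_of_mem_roots hr)
  have h00 : (1:ℝ) = ‖q.leadingCoeff‖ * ((q.roots.map (fun r => ‖r‖)).prod) := by
    have h1 := Polynomial.coeff_eq_esymm_roots_of_card hcard (Nat.zero_le n)
    rw [h0, Nat.sub_zero] at h1
    have he := esymm_card_eq q.roots
    rw [hcard] at he
    rw [he] at h1
    calc (1:ℝ) = ‖(1:ℂ)‖ := by simp
      _ = ‖q.leadingCoeff * (-1)^n * q.roots.prod‖ := by rw [← h1]
      _ = ‖q.leadingCoeff‖ * ((q.roots.map (fun r => ‖r‖)).prod) := by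
          rw [norm_mul, norm_mul, norm_pow, norm_neg, norm_one, one_pow, mul_one, norm_mprod]
  have h1 := Polynomial.coeff_eq_esymm_roots_of_card hcard hk
  rw [h1]
  calc ‖q.leadingCoeff * (-1)^(n-k) * q.roots.esymm (n-k)‖
      = ‖q.leadingCoeff‖ * ‖q.roots.esymm (n-k)‖ := by
        rw [norm_mul, norm_mul, norm_pow, norm_neg, norm_one, one_pow, mul_one]
    _ ≤ ‖q.leadingCoeff‖ * (((Multiset.card q.roots).choose (n-k) : ℝ) * ((q.roots.map (fun r => ‖r‖)).prod)) := by
        exact mul_le_mul_of_nonneg_left (esymm_norm_le q.roots hroots (n-k)) (norm_nonneg _)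
    _ = ((n.choose (n-k) : ℝ)) * (‖q.leadingCoeff‖ * ((q.roots.map (fun r => ‖r‖)).prod)) := by
        rw [hcard]; ring
    _ = (n.choose (n-k) : ℝ) := by rw [← h00, mul_one]
    _ = (n.choose k : ℝ) := by rw [Nat.choose_symm hk]



lemma eval_bound_one_var (m : ℕ) (q : Polynomial ℂ) (h0 : q.coeff 0 = 1)
    (hd : q.natDegree ≤ m)
    (hz : ∀ x : ℂ, ‖x‖ ≤ 1 → q.eval x ≠ 0) (x : ℂ) (hx : ‖x‖ ≤ 1) :
    ‖q.eval x‖ ≤ (2:ℝ)^m := by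
  set n := q.natDegree
  rw [Polynomial.eval_eq_sum_range]
  calc ‖∑ k ∈ Finset.range (n+1), q.coeff k * x^k‖
      ≤ ∑ k ∈ Finset.range (n+1), ‖q.coeff k * x^k‖ := norm_sum_le _ _
    _ ≤ ∑ k ∈ Finset.range (n+1), (n.choose k : ℝ) := by
        apply Finset.sum_le_sum
        intro k _
        rw [norm_mul, norm_pow]
        calc ‖q.coeff k‖ * ‖x‖^k ≤ (n.choose k : ℝ) * 1 := by
              apply mul_le_mul (coeff_bound_one_var q h0 hz k)
                (pow_le_one₀ (norm_nonneg x) hx) (by positivity) (by positivity)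
          _ = (n.choose k : ℝ) := mul_one _
    _ = ((∑ k ∈ Finset.range (n+1), n.choose k : ℕ) : ℝ) := by push_cast; ring
    _ = ((2^n : ℕ) : ℝ) := by rw [Nat.sum_range_choose]
    _ ≤ (2:ℝ)^m := by
        push_cast
        exact pow_le_pow_right₀ one_le_two hd



lemma mv_eval_bound (N m : ℕ) (p : MvPolynomial (Fin N) ℂ) (h0 : p.coeff 0 = 1)
    (hd : p.totalDegree ≤ m)
    (hz : ∀ z : EuclideanSpace ℂ (Fin N), ‖z‖ < 1 →
      MvPolynomial.eval (fun i => z i) p ≠ 0)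
    (w : EuclideanSpace ℂ (Fin N)) (hw : ‖w‖ < 1) :
    ‖MvPolynomial.eval (fun i => w i) p‖ ≤ (2:ℝ)^m := by
  set q : Polynomial ℂ :=
    MvPolynomial.eval₂ (Polynomial.C : ℂ →+* Polynomial ℂ)
      (fun i => Polynomial.C (w i) * Polynomial.X) p with hq
  have hqev : ∀ x : ℂ, q.eval x = MvPolynomial.eval (fun i => w i * x) p := by
    intro x
    rw [hq]
    have := MvPolynomial.eval₂_comp_left (Polynomial.evalRingHom x)
      (Polynomial.C : ℂ →+* Polynomial ℂ) (fun i => Polynomial.C (w i) * Polynomial.X) p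
    simp only [eval_mul, eval_C, eval_X, coe_evalRingHom] at this
    rw [show ((Polynomial.evalRingHom x).comp (Polynomial.C : ℂ →+* Polynomial ℂ)) = RingHom.id ℂ by
      ext c; simp] at this
    rw [show (Polynomial.eval x) ∘ (fun i => Polynomial.C (w i) * Polynomial.X)
        = fun i => w i * x from funext fun i => by simp] at this
    exact this.trans rfl
  have hdeg : q.natDegree ≤ m := by
    rw [hq, MvPolynomial.eval₂_eq]
    apply Polynomial.natDegree_sum_le_of_forall_le
    intro β hβ
    calc (Polynomial.C (p.coeff β) * ∏ i ∈ β.support, (Polynomial.C (w i) * Polynomial.X) ^ β i).natDegree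
        ≤ (Polynomial.C (p.coeff β)).natDegree
          + (∏ i ∈ β.support, (Polynomial.C (w i) * Polynomial.X) ^ β i).natDegree :=
          Polynomial.natDegree_mul_le
      _ ≤ 0 + ∑ i ∈ β.support, ((Polynomial.C (w i) * Polynomial.X) ^ β i).natDegree := by
          gcongr
          · exact le_of_eq (Polynomial.natDegree_C _)
          · exact Polynomial.natDegree_prod_le _ _
      _ ≤ ∑ i ∈ β.support, β i := by
          rw [zero_add]
          apply Finset.sum_le_sum
          intro i _
          calc ((Polynomial.C (w i) * Polynomial.X) ^ β i).natDegree
              ≤ β i * (Polynomial.C (w i) * Polynomial.X).natDegree := Polynomial.natDegree_pow_le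
            _ ≤ β i * 1 := by
                gcongr
                calc (Polynomial.C (w i) * Polynomial.X).natDegree
                    ≤ (Polynomial.C (w i)).natDegree + Polynomial.X.natDegree :=
                      Polynomial.natDegree_mul_le
                  _ ≤ 1 := by simp
            _ = β i := mul_one _
      _ ≤ m := le_trans (MvPolynomial.le_totalDegree hβ) hd
  have hq0 : q.coeff 0 = 1 := by
    rw [Polynomial.coeff_zero_eq_eval_zero, hqev 0]
    simp only [mul_zero]
    rw [MvPolynomial.eval_zero']
    exact h0
  have hqz : ∀ x : ℂ, ‖x‖ ≤ 1 → q.eval x ≠ 0 := by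
    intro x hx
    rw [hqev x]
    have hzx : ‖x • w‖ < 1 := by
      rw [norm_smul]
      calc ‖x‖ * ‖w‖ ≤ 1 * ‖w‖ := by gcongr
        _ = ‖w‖ := one_mul _
        _ < 1 := hw
    have h2 := hz (x • w) hzx
    have : (fun i => w i * x) = fun i => (x • w) i := by
      funext i
      show w i * x = x * w i
      ring
    rw [this]
    exact h2
  have := eval_bound_one_var m q hq0 hdeg hqz 1 (by norm_num)
  rw [hqev 1] at this
  simpa using this


section
variable (m : ℕ)

noncomputable def zet (m : ℕ) : ℂ := Complex.exp (2 * Real.pi * I / (m+1))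

lemma zet_prim : IsPrimitiveRoot (zet m) (m+1) := by
  have := Complex.isPrimitiveRoot_exp (m+1) (Nat.succ_ne_zero m)
  simpa [zet] using this

lemma zet_norm : ‖zet m‖ = 1 := (zet_prim m).norm'_eq_one (Nat.succ_ne_zero m)

lemma zet_ne : zet m ≠ 0 := fun h => by simpa [h] using zet_norm m

lemma orth (b a : ℕ) (hb : b ≤ m) (ha : a ≤ m) :
    ∑ k ∈ Finset.range (m+1), ((zet m)^b * ((zet m)⁻¹)^a)^k
      = if b = a then ((m:ℂ)+1) else 0 := by
  by_cases h : b = a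
  · subst h
    rw [inv_pow, mul_inv_cancel₀ (pow_ne_zero _ (zet_ne m))]
    simp
  · rw [if_neg h]
    set x := (zet m)^b * ((zet m)⁻¹)^a with hx
    have h1 : (zet m)^(m+1) = 1 := (zet_prim m).pow_eq_one
    have hxe : x = (zet m)^b * ((zet m)^a)⁻¹ := by rw [hx, inv_pow]
    have hxn : x ^ (m+1) = 1 := by
      rw [hxe, mul_pow, inv_pow, ← pow_mul, ← pow_mul, mul_comm b, mul_comm a, pow_mul, pow_mul,
        h1, one_pow, one_pow, inv_one, mul_one]
    have hx1 : x ≠ 1 := by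
      intro hc
      apply h
      apply (zet_prim m).pow_inj (Nat.lt_succ_of_le hb) (Nat.lt_succ_of_le ha)
      rw [hxe] at hc
      exact (mul_inv_eq_one₀ (pow_ne_zero a (zet_ne m))).mp hc
    rw [geom_sum_eq hx1, hxn]
    simp
end




lemma fsum_eq (N : ℕ) (β : Fin N →₀ ℕ) : (β.sum fun _ k => k) = ∑ i, β i :=
  Finsupp.sum_fintype _ _ fun _ => rfl

lemma coord_le_sum (N : ℕ) (β : Fin N →₀ ℕ) (i : Fin N) : β i ≤ β.sum fun _ k => k := by
  rw [fsum_eq]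
  exact Finset.single_le_sum (f := fun i => β i) (fun _ _ => Nat.zero_le _) (Finset.mem_univ i)

lemma extract (N m : ℕ) (p : MvPolynomial (Fin N) ℂ) (hd : p.totalDegree ≤ m)
    (α : Fin N →₀ ℕ) (hα : (α.sum fun _ k => k) ≤ m) (r : ℝ) :
    ∑ j : Fin N → Fin (m+1),
      (MvPolynomial.eval (fun i => (r:ℂ) * (zet m)^(j i : ℕ)) p)
        * ∏ i, ((zet m)⁻¹)^((j i : ℕ) * α i)
    = ((m:ℂ)+1)^N * (r:ℂ)^(α.sum fun _ k => k) * p.coeff α := by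
  have hbm : ∀ β ∈ p.support, ∀ i, β i ≤ m := fun β hβ i =>
    le_trans (coord_le_sum N β i) (le_trans (MvPolynomial.le_totalDegree hβ) hd)
  have ham : ∀ i, α i ≤ m := fun i => le_trans (coord_le_sum N α i) hα
  calc ∑ j : Fin N → Fin (m+1),
      (MvPolynomial.eval (fun i => (r:ℂ) * (zet m)^(j i : ℕ)) p)
        * ∏ i, ((zet m)⁻¹)^((j i : ℕ) * α i)
      = ∑ j : Fin N → Fin (m+1), ∑ β ∈ p.support,
          p.coeff β * ∏ i, (((r:ℂ) * (zet m)^(j i : ℕ))^(β i) * ((zet m)⁻¹)^((j i : ℕ) * α i)) := by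
        apply Finset.sum_congr rfl
        intro j _
        rw [MvPolynomial.eval_eq', Finset.sum_mul]
        apply Finset.sum_congr rfl
        intro β _
        rw [mul_assoc, ← Finset.prod_mul_distrib]
    _ = ∑ β ∈ p.support, ∑ j : Fin N → Fin (m+1),
          p.coeff β * ∏ i, (((r:ℂ) * (zet m)^(j i : ℕ))^(β i) * ((zet m)⁻¹)^((j i : ℕ) * α i)) :=
        Finset.sum_comm
    _ = ∑ β ∈ p.support, p.coeff β *
          ∏ i, ∑ k : Fin (m+1), (((r:ℂ) * (zet m)^(k : ℕ))^(β i) * ((zet m)⁻¹)^((k : ℕ) * α i)) := by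
        apply Finset.sum_congr rfl
        intro β _
        rw [← Finset.mul_sum]
        congr 1
        rw [Finset.prod_univ_sum]
        rw [← Fintype.piFinset_univ]
    _ = ∑ β ∈ p.support, p.coeff β *
          ((r:ℂ)^(β.sum fun _ k => k) * ∏ i, (if β i = α i then ((m:ℂ)+1) else 0)) := by
        apply Finset.sum_congr rfl
        intro β hβ
        congr 1
        calc ∏ i, ∑ k : Fin (m+1), (((r:ℂ) * (zet m)^(k : ℕ))^(β i) * ((zet m)⁻¹)^((k : ℕ) * α i))
            = ∏ i, ((r:ℂ)^(β i) * (if β i = α i then ((m:ℂ)+1) else 0)) := by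
              apply Finset.prod_congr rfl
              intro i _
              rw [Fin.sum_univ_eq_sum_range
                (fun k => ((r:ℂ) * (zet m)^k)^(β i) * ((zet m)⁻¹)^(k * α i))]
              calc ∑ k ∈ Finset.range (m+1), ((r:ℂ) * (zet m)^k)^(β i) * ((zet m)⁻¹)^(k * α i)
                  = ∑ k ∈ Finset.range (m+1),
                      (r:ℂ)^(β i) * ((zet m)^(β i) * ((zet m)⁻¹)^(α i))^k := by
                    apply Finset.sum_congr rfl
                    intro k _
                    rw [mul_pow, mul_pow, ← pow_mul, ← pow_mul, ← pow_mul,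
                      Nat.mul_comm k (β i), Nat.mul_comm k (α i), Nat.mul_comm (β i) k]
                    ring
                _ = (r:ℂ)^(β i) * (if β i = α i then ((m:ℂ)+1) else 0) := by
                    rw [← Finset.mul_sum, orth m (β i) (α i) (hbm β hβ i) (ham i)]
          _ = (r:ℂ)^(β.sum fun _ k => k) * ∏ i, (if β i = α i then ((m:ℂ)+1) else 0) := by
              rw [Finset.prod_mul_distrib, Finset.prod_pow_eq_pow_sum, fsum_eq]
    _ = ((m:ℂ)+1)^N * (r:ℂ)^(α.sum fun _ k => k) * p.coeff α := by
        have hprodif : ∀ β : Fin N →₀ ℕ,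
            (∏ i, if β i = α i then ((m:ℂ)+1) else 0)
              = if β = α then ((m:ℂ)+1)^N else 0 := by
          intro β
          by_cases hba : β = α
          · subst hba
            simp [Finset.prod_const, Finset.card_univ]
          · rw [if_neg hba]
            obtain ⟨i, hi⟩ : ∃ i, β i ≠ α i := by
              by_contra hc
              push_neg at hc
              exact hba (Finsupp.ext hc)
            exact Finset.prod_eq_zero (Finset.mem_univ i) (if_neg hi)
        calc ∑ β ∈ p.support, p.coeff β *
              ((r:ℂ)^(β.sum fun _ k => k) * ∏ i, (if β i = α i then ((m:ℂ)+1) else 0))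
            = ∑ β ∈ p.support, (if β = α then
                p.coeff β * ((r:ℂ)^(β.sum fun _ k => k) * ((m:ℂ)+1)^N) else 0) := by
              apply Finset.sum_congr rfl
              intro β _
              rw [hprodif β]
              split_ifs <;> simp
          _ = if α ∈ p.support then
                p.coeff α * ((r:ℂ)^(α.sum fun _ k => k) * ((m:ℂ)+1)^N) else 0 :=
              Finset.sum_ite_eq' p.support α _
          _ = ((m:ℂ)+1)^N * (r:ℂ)^(α.sum fun _ k => k) * p.coeff α := by
              by_cases hs : α ∈ p.support
              · rw [if_pos hs]; ring
              · rw [if_neg hs, MvPolynomial.notMem_support_iff.mp hs]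
                ring



/-- For each `m`, there is a constant `C̃_m` depending only on `m` such that any
polynomial `p(z) = 1 + ∑_{1 ≤ |α| ≤ m} a_α z^α` on `ℂ^N` (`N ≥ 1`) with no zeros
in the open unit ball has all its coefficients bounded by `C̃_m`. -/
theorem stmt_2 (N m : ℕ) (hN : 1 ≤ N) :
    ∃ C : ℝ, ∀ p : MvPolynomial (Fin N) ℂ, p.coeff 0 = 1 → p.totalDegree ≤ m →
      (∀ z : EuclideanSpace ℂ (Fin N), ‖z‖ < 1 →
        MvPolynomial.eval (fun i => z i) p ≠ 0) →
      ∀ α : Fin N →₀ ℕ, 1 ≤ (α.sum fun _ k => k) → (α.sum fun _ k => k) ≤ m →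
        ‖p.coeff α‖ ≤ C := by
  set r : ℝ := 1 / (2 * Real.sqrt N) with hr
  have hsN : 1 ≤ Real.sqrt N := by
    rw [show (1:ℝ) = Real.sqrt 1 by simp]
    exact Real.sqrt_le_sqrt (by exact_mod_cast hN)
  have hrpos : 0 < r := by rw [hr]; positivity
  have hrle : r ≤ 1 := by
    rw [hr]
    rw [div_le_one (by positivity)]
    nlinarith
  refine ⟨(2:ℝ)^m * (2 * Real.sqrt N)^m, ?_⟩
  intro p h0 hd hz α hα1 hα2
  -- norm of each grid point is 1/2
  have key := extract N m p hd α hα2 r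
  have hnorm : ‖((m:ℂ)+1)^N * (r:ℂ)^(α.sum fun _ k => k) * p.coeff α‖
      ≤ ((m:ℝ)+1)^N * (2:ℝ)^m := by
    rw [← key]
    calc ‖∑ j : Fin N → Fin (m+1),
        (MvPolynomial.eval (fun i => (r:ℂ) * (zet m)^(j i : ℕ)) p)
          * ∏ i, ((zet m)⁻¹)^((j i : ℕ) * α i)‖
        ≤ ∑ j : Fin N → Fin (m+1), ‖(MvPolynomial.eval (fun i => (r:ℂ) * (zet m)^(j i : ℕ)) p)
            * ∏ i, ((zet m)⁻¹)^((j i : ℕ) * α i)‖ := norm_sum_le _ _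
      _ ≤ ∑ _j : Fin N → Fin (m+1), (2:ℝ)^m := by
          apply Finset.sum_le_sum
          intro j _
          rw [norm_mul]
          have h1 : ‖∏ i, ((zet m)⁻¹)^((j i : ℕ) * α i)‖ = 1 := by
            rw [norm_prod]
            apply Finset.prod_eq_one
            intro i _
            rw [norm_pow, norm_inv, zet_norm]
            simp
          rw [h1, mul_one]
          set w : EuclideanSpace ℂ (Fin N) := WithLp.toLp 2 (fun i => (r:ℂ) * (zet m)^(j i : ℕ) : Fin N → ℂ)
            with hw
          have hwn : ‖w‖ < 1 := by
            rw [EuclideanSpace.norm_eq]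
            have : ∀ i, ‖w i‖^2 = r^2 := by
              intro i
              rw [hw]
              show ‖(r:ℂ) * (zet m)^(j i : ℕ)‖^2 = r^2
              rw [norm_mul, norm_pow, zet_norm, one_pow, mul_one, Complex.norm_real, Real.norm_eq_abs, abs_of_pos hrpos]
            rw [Finset.sum_congr rfl (fun i _ => this i)]
            rw [Finset.sum_const, Finset.card_univ, Fintype.card_fin, nsmul_eq_mul]
            rw [show (N:ℝ) * r^2 = ((Real.sqrt N) * r)^2 by
              rw [mul_pow, Real.sq_sqrt (by positivity)]]
            rw [Real.sqrt_sq (by positivity)]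
            have hs0 : Real.sqrt N ≠ 0 := by positivity
            rw [hr, show Real.sqrt N * (1 / (2 * Real.sqrt N)) = 1/2 by field_simp]
            norm_num
          exact mv_eval_bound N m p h0 hd hz w hwn
      _ = ((m:ℝ)+1)^N * (2:ℝ)^m := by
          rw [Finset.sum_const, Finset.card_univ, Fintype.card_fun, Fintype.card_fin,
            Fintype.card_fin, nsmul_eq_mul]
          push_cast
          ring
  rw [norm_mul, norm_mul, norm_pow, norm_pow, Complex.norm_real, Real.norm_eq_abs, abs_of_pos hrpos] at hnorm
  have hm1 : ‖(m:ℂ)+1‖ = (m:ℝ)+1 := by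
    rw [show (m:ℂ)+1 = ((m+1 : ℕ):ℂ) by push_cast; ring, Complex.norm_natCast]
    push_cast; ring
  rw [hm1] at hnorm
  set s := (α.sum fun _ k => k)
  have hpowpos : (0:ℝ) < ((m:ℝ)+1)^N := by positivity
  have h2 : r^s * ‖p.coeff α‖ ≤ (2:ℝ)^m := by
    nlinarith [norm_nonneg (p.coeff α), pow_pos hrpos s]
  have h3 : r^m ≤ r^s := pow_le_pow_of_le_one (le_of_lt hrpos) hrle hα2
  have h4 : r^m * ‖p.coeff α‖ ≤ (2:ℝ)^m :=
    le_trans (by nlinarith [norm_nonneg (p.coeff α)]) h2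
  have hrm : r^m = 1 / (2 * Real.sqrt N)^m := by
    rw [hr, div_pow, one_pow]
  rw [hrm] at h4
  rw [div_mul_eq_mul_div, one_mul, div_le_iff₀ (by positivity)] at h4
  calc ‖p.coeff α‖ = ‖p.coeff α‖ := rfl
    _ ≤ (2:ℝ)^m * (2*Real.sqrt N)^m := by nlinarith [pow_pos (show (0:ℝ) < 2*Real.sqrt N by positivity) m, norm_nonneg (p.coeff α)]
end

section
/- Let p be a polynomial on ℂ^N with p(0) = 1 and no zeros in the open unit ball 𝔹^N, of total degree at most m. Then for every z on the unit sphere ∂𝔹^N, the one-variable polynomial ξ ↦ p(ξz) on the unit disk has no zeros in the unit disk, hence |p(w)| ≤ m·C_m + 1 for all w ∈ 𝔹^N, where C_m is the one-variable coefficient bound constant. -/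
open Polynomial Multiset NNReal

private lemma nnnorm_msprod (s : Multiset ℂ) : ‖s.prod‖₊ = (s.map (‖·‖₊)).prod := by
  induction s using Multiset.induction with
  | empty => simp
  | cons a s ih => simp [nnnorm_mul, ih]

private lemma nnnorm_mssum (s : Multiset ℂ) : ‖s.sum‖₊ ≤ (s.map (‖·‖₊)).sum := by
  induction s using Multiset.induction with
  | empty => simp
  | cons a s ih =>
    simp only [Multiset.sum_cons, Multiset.map_cons]
    exact (nnnorm_add_le _ _).trans (by gcongr)

private lemma coeff_bound (m : ℕ) (q : Polynomial ℂ) (h0 : q.coeff 0 = 1) (hdeg : q.natDegree ≤ m)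
    (hz : ∀ ξ : ℂ, ‖ξ‖ < 1 → q.eval ξ ≠ 0) (k : ℕ) (hk : k ≤ m) :
    ‖q.coeff k‖ ≤ (2 : ℝ) ^ m := by
  have hq0 : q ≠ 0 := fun h => by simp [h] at h0
  have hcard : Multiset.card q.roots = q.natDegree :=
    Polynomial.splits_iff_card_roots.1 (IsAlgClosed.splits q)
  set d := q.natDegree with hd
  have hroots : ∀ r ∈ q.roots, (1 : ℝ≥0) ≤ ‖r‖₊ := by
    intro r hr
    by_contra h
    push_neg at h
    exact hz r h (Polynomial.isRoot_of_mem_roots hr)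
  -- product identity  ‖lc‖ * ∏ ‖r‖ = 1
  have hprod := Polynomial.C_leadingCoeff_mul_prod_multiset_X_sub_C hcard
  have hL : ‖q.leadingCoeff‖₊ * (q.roots.map (‖·‖₊)).prod = 1 := by
    have h1 : q.eval 0 = q.leadingCoeff * ((q.roots.map fun a => (0:ℂ) - a)).prod := by
      conv_lhs => rw [← hprod]
      simp [Polynomial.eval_multiset_prod, Multiset.map_map]
    have h2 : ‖q.eval 0‖₊ = 1 := by
      rw [← Polynomial.coeff_zero_eq_eval_zero, h0]; simp
    rw [h1] at h2
    rw [← h2, nnnorm_mul, nnnorm_msprod, Multiset.map_map]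
    congr 2
    exact (Multiset.map_congr rfl fun a _ => by simp).symm
  rcases le_or_gt k d with hkd | hkd
  · have hco := Polynomial.coeff_eq_esymm_roots_of_card hcard hkd
    have key : ∀ t ∈ q.roots.powersetCard (d - k),
        ‖q.leadingCoeff‖₊ * ‖Multiset.prod t‖₊ ≤ 1 := by
      intro t ht
      obtain ⟨hle, -⟩ := Multiset.mem_powersetCard.1 ht
      have hsplit : (q.roots.map (‖·‖₊)).prod
          = (t.map (‖·‖₊)).prod * ((q.roots - t).map (‖·‖₊)).prod := by
        conv_lhs => rw [← tsub_add_cancel_of_le hle]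
        rw [Multiset.map_add, Multiset.prod_add, mul_comm]
      have hone : (1 : ℝ≥0) ≤ ((q.roots - t).map (‖·‖₊)).prod := by
        apply Multiset.one_le_prod_of_one_le
        intro x hx
        obtain ⟨r, hr, rfl⟩ := Multiset.mem_map.1 hx
        exact hroots r (Multiset.mem_of_le tsub_le_self hr)
      calc ‖q.leadingCoeff‖₊ * ‖Multiset.prod t‖₊
          = ‖q.leadingCoeff‖₊ * (t.map (‖·‖₊)).prod := by rw [nnnorm_msprod]
        _ ≤ ‖q.leadingCoeff‖₊ * ((t.map (‖·‖₊)).prod * ((q.roots - t).map (‖·‖₊)).prod) := by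
            exact mul_le_mul_right (le_mul_of_one_le_right (_root_.zero_le) hone) _
        _ = 1 := by rw [← hsplit, hL]
    have hbound : ‖q.coeff k‖₊ ≤ (Multiset.card (q.roots.powersetCard (d - k)) : ℝ≥0) := by
      rw [hco]
      have : ‖q.leadingCoeff * (-1) ^ (d - k) * q.roots.esymm (d - k)‖₊
          = ‖q.leadingCoeff‖₊ * ‖q.roots.esymm (d - k)‖₊ := by
        simp [nnnorm_mul]
      rw [this, Multiset.esymm]
      calc ‖q.leadingCoeff‖₊ * ‖((q.roots.powersetCard (d - k)).map Multiset.prod).sum‖₊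
          ≤ ‖q.leadingCoeff‖₊ * (((q.roots.powersetCard (d - k)).map Multiset.prod).map (‖·‖₊)).sum :=
            mul_le_mul_right (nnnorm_mssum _) _
        _ = ((q.roots.powersetCard (d - k)).map
              (fun t => ‖q.leadingCoeff‖₊ * ‖Multiset.prod t‖₊)).sum := by
            rw [Multiset.map_map, ← Multiset.sum_map_mul_left]; rfl
        _ ≤ ((q.roots.powersetCard (d - k)).map (fun _ => (1 : ℝ≥0))).sum := by
            apply Multiset.sum_map_le_sum_map
            exact key
        _ = (Multiset.card (q.roots.powersetCard (d - k)) : ℝ≥0) := by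
            simp [Multiset.map_const']
    have hcount : Multiset.card (q.roots.powersetCard (d - k)) ≤ 2 ^ m := by
      rw [Multiset.card_powersetCard, hcard]
      calc d.choose (d - k) ≤ ∑ i ∈ Finset.range (d + 1), d.choose i :=
            Finset.single_le_sum (fun i _ => Nat.zero_le _) (Finset.mem_range.2 (by omega))
        _ = 2 ^ d := Nat.sum_range_choose d
        _ ≤ 2 ^ m := Nat.pow_le_pow_right (by norm_num) hdeg
    have : ‖q.coeff k‖₊ ≤ ((2 : ℝ≥0) ^ m) := by
      refine hbound.trans ?_
      have : ((Multiset.card (q.roots.powersetCard (d - k)) : ℝ≥0)) ≤ ((2 ^ m : ℕ) : ℝ≥0) := by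
        exact_mod_cast hcount
      simpa using this
    calc ‖q.coeff k‖ = (‖q.coeff k‖₊ : ℝ) := rfl
      _ ≤ (((2 : ℝ≥0) ^ m : ℝ≥0) : ℝ) := by exact_mod_cast this
      _ = (2 : ℝ) ^ m := by push_cast; ring
  · rw [Polynomial.coeff_eq_zero_of_natDegree_lt hkd]
    simp only [norm_zero]
    positivity

private lemma eval_slice {N : ℕ} (p : MvPolynomial (Fin N) ℂ) (w : Fin N → ℂ) (ξ : ℂ) :
    (MvPolynomial.aeval (fun i => Polynomial.C (w i) * Polynomial.X) p).eval ξ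
      = MvPolynomial.eval (fun i => ξ * w i) p := by
  induction p using MvPolynomial.induction_on with
  | C a => simp
  | add p q hp hq => simp [hp, hq]
  | mul_X p i hp =>
    simp only [map_mul, MvPolynomial.aeval_X, Polynomial.eval_mul, Polynomial.eval_C,
      Polynomial.eval_X, MvPolynomial.eval_mul, MvPolynomial.eval_X, hp]
    ring

/-- Slicing argument: if a polynomial `p` on `ℂ^N` of total degree at most `m`
with `p(0) = 1` has no zeros in the open unit ball, then each slice
`ξ ↦ p(ξ z)` for `z` on the unit sphere has no zeros in the unit disk, and
consequently `|p(w)| ≤ m·C_m + 1` on the ball, where `C_m` is the one-variable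
coefficient bound constant. -/
theorem stmt_3 (N m : ℕ) (hN : 1 ≤ N) (p : MvPolynomial (Fin N) ℂ)
    (h0 : p.coeff 0 = 1) (hdeg : p.totalDegree ≤ m)
    (hnz : ∀ z : EuclideanSpace ℂ (Fin N), ‖z‖ < 1 →
      MvPolynomial.eval (fun i => z i) p ≠ 0) :
    (∀ z : EuclideanSpace ℂ (Fin N), ‖z‖ = 1 → ∀ ξ : ℂ, ‖ξ‖ < 1 →
      MvPolynomial.eval (fun i => ξ * z i) p ≠ 0) ∧
    ∃ C : ℝ,
      (∀ q : Polynomial ℂ, q.coeff 0 = 1 → q.natDegree ≤ m →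
        (∀ ξ : ℂ, ‖ξ‖ < 1 → q.eval ξ ≠ 0) →
        ∀ i : ℕ, 1 ≤ i → i ≤ m → ‖q.coeff i‖ ≤ C) ∧
      (∀ w : EuclideanSpace ℂ (Fin N), ‖w‖ < 1 →
        ‖MvPolynomial.eval (fun i => w i) p‖ ≤ m * C + 1) := by
  have slice_nz : ∀ w : EuclideanSpace ℂ (Fin N), ‖w‖ ≤ 1 → ∀ ξ : ℂ, ‖ξ‖ < 1 →
      MvPolynomial.eval (fun i => ξ * w i) p ≠ 0 := by
    intro w hw ξ hξ
    have hlt : ‖ξ • w‖ < 1 := by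
      rw [norm_smul]
      calc ‖ξ‖ * ‖w‖ ≤ ‖ξ‖ * 1 := by
            exact mul_le_mul_of_nonneg_left hw (norm_nonneg _)
        _ < 1 := by simpa using hξ
    have := hnz (ξ • w) hlt
    have heq : (fun i => ξ * w i) = fun i : Fin N => (ξ • w) i := rfl
    rw [heq]
    exact this
  constructor
  · intro z hz ξ hξ
    exact slice_nz z (le_of_eq hz) ξ hξ
  · refine ⟨(2 : ℝ) ^ m, fun q hq0 hqd hqz i _ hi => coeff_bound m q hq0 hqd hqz i hi, ?_⟩
    intro w hw
    set q : Polynomial ℂ := MvPolynomial.aeval (fun i => Polynomial.C (w i) * Polynomial.X) p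
      with hqdef
    have hqd : q.natDegree ≤ m := by
      have := MvPolynomial.aeval_natDegree_le (n := 1) p hdeg
        (fun i => Polynomial.C (w i) * Polynomial.X)
        (fun i => (Polynomial.natDegree_C_mul_le (w i) Polynomial.X).trans
          (le_of_eq Polynomial.natDegree_X))
      simpa using this
    have hq0 : q.coeff 0 = 1 := by
      rw [Polynomial.coeff_zero_eq_eval_zero, hqdef, eval_slice]
      have : (fun i : Fin N => (0 : ℂ) * w i) = fun _ => 0 := by funext i; ring
      rw [this]
      simp only [MvPolynomial.eval_zero']; exact h0
    have hqz : ∀ ξ : ℂ, ‖ξ‖ < 1 → q.eval ξ ≠ 0 := by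
      intro ξ hξ
      rw [hqdef, eval_slice]
      exact slice_nz w hw.le ξ hξ
    have heval : MvPolynomial.eval (fun i => w i) p = q.eval 1 := by
      rw [hqdef, eval_slice]
      simp
    rw [heval, Polynomial.eval_eq_sum_range' (lt_of_le_of_lt hqd (Nat.lt_succ_self m))]
    calc ‖∑ i ∈ Finset.range (m + 1), q.coeff i * 1 ^ i‖
        ≤ ∑ i ∈ Finset.range (m + 1), ‖q.coeff i‖ := by
          refine (norm_sum_le _ _).trans ?_
          apply Finset.sum_le_sum
          intro i _
          simp
      _ = ‖q.coeff 0‖ + ∑ i ∈ Finset.range m, ‖q.coeff (i + 1)‖ := by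
          rw [Finset.sum_range_succ']; ring
      _ ≤ 1 + ∑ i ∈ Finset.range m, (2 : ℝ) ^ m := by
          gcongr with i hi
          · rw [hq0]; simp
          · exact coeff_bound m q hq0 hqd hqz (i + 1) (Finset.mem_range.1 hi)
      _ = m * (2 : ℝ) ^ m + 1 := by
          simp [Finset.sum_const]
          ring
end

section
/- Fix ε₀ > 0, c > 0, and 0 < ε < 1. Define F : ℂ² → ℂ⁶ by F(z,w) = (√ε₀ z⁴, (1/2)√(ε₀c)(z⁷+z), w, z⁵, √ε z, (1/2)√(ε₀c)(z⁷−z)). Then for all (z,w) ∈ ℂ², Σ_{j=1}^5 |F_j(z,w)|² − |F_6(z,w)|² = ε₀(|z|⁸ + c·Re(|z|²z⁶)) + |w|² + |z|¹⁰ + ε|z|². Consequently F maps the hypersurface M_ε = {ε₀(|z|⁸ + c·Re(|z|²z⁶)) + |w|² + |z|¹⁰ + ε|z|² = 1} into the generalized sphere {Z ∈ ℂ⁶ : Σ_{j=1}^5 |Z_j|² − |Z_6|² = 1}. -/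
open Complex

/-- The explicit map `F : ℂ² → ℂ⁶` satisfies
`∑_{j=1}^5 |F_j|² − |F_6|² = ε₀(|z|⁸ + c·Re(|z|²z⁶)) + |w|² + |z|¹⁰ + ε|z|²`,
and consequently maps `M_ε` into the generalized sphere
`{∑_{j=1}^5 |Z_j|² − |Z_6|² = 1}`. -/
theorem stmt_5 (ε₀ c ε : ℝ) (h₀ : 0 < ε₀) (hc : 0 < c) (hε : 0 < ε) (hε1 : ε < 1) :
    ∀ z w : ℂ,
      (‖(Real.sqrt ε₀ : ℂ) * z ^ 4‖ ^ 2
        + ‖(1 / 2 : ℂ) * (Real.sqrt (ε₀ * c) : ℂ) * (z ^ 7 + z)‖ ^ 2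
        + ‖w‖ ^ 2 + ‖z ^ 5‖ ^ 2 + ‖(Real.sqrt ε : ℂ) * z‖ ^ 2
        - ‖(1 / 2 : ℂ) * (Real.sqrt (ε₀ * c) : ℂ) * (z ^ 7 - z)‖ ^ 2
        = ε₀ * (‖z‖ ^ 8 + c * (Complex.normSq z * (z ^ 6).re))
          + ‖w‖ ^ 2 + ‖z‖ ^ 10 + ε * ‖z‖ ^ 2)
      ∧ (ε₀ * (‖z‖ ^ 8 + c * (Complex.normSq z * (z ^ 6).re))
            + ‖w‖ ^ 2 + ‖z‖ ^ 10 + ε * ‖z‖ ^ 2 = 1 →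
          ‖(Real.sqrt ε₀ : ℂ) * z ^ 4‖ ^ 2
            + ‖(1 / 2 : ℂ) * (Real.sqrt (ε₀ * c) : ℂ) * (z ^ 7 + z)‖ ^ 2
            + ‖w‖ ^ 2 + ‖z ^ 5‖ ^ 2 + ‖(Real.sqrt ε : ℂ) * z‖ ^ 2
            - ‖(1 / 2 : ℂ) * (Real.sqrt (ε₀ * c) : ℂ) * (z ^ 7 - z)‖ ^ 2 = 1) := by
  intro z w
  have hns : ∀ a : ℂ, ‖a‖ ^ 2 = Complex.normSq a := fun a => by
    rw [Complex.sq_norm]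
  have hre : (z ^ 7 * (starRingEnd ℂ) z).re = Complex.normSq z * (z ^ 6).re := by
    have : z ^ 7 * (starRingEnd ℂ) z = (Complex.normSq z : ℂ) * z ^ 6 := by
      rw [← Complex.mul_conj]; ring
    rw [this, Complex.re_ofReal_mul]
  have key : ‖z ^ 7 + z‖ ^ 2 - ‖z ^ 7 - z‖ ^ 2 = 4 * (Complex.normSq z * (z ^ 6).re) := by
    rw [hns, hns, Complex.normSq_add, Complex.normSq_sub, hre]; ring
  have hs0 : Real.sqrt ε₀ ^ 2 = ε₀ := Real.sq_sqrt h₀.le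
  have hsc : Real.sqrt (ε₀ * c) ^ 2 = ε₀ * c := Real.sq_sqrt (by positivity)
  have hse : Real.sqrt ε ^ 2 = ε := Real.sq_sqrt hε.le
  have hz8 : ‖z ^ 4‖ ^ 2 = ‖z‖ ^ 8 := by rw [norm_pow]; ring
  have hz10 : ‖z ^ 5‖ ^ 2 = ‖z‖ ^ 10 := by rw [norm_pow]; ring
  have main : ‖(Real.sqrt ε₀ : ℂ) * z ^ 4‖ ^ 2
        + ‖(1 / 2 : ℂ) * (Real.sqrt (ε₀ * c) : ℂ) * (z ^ 7 + z)‖ ^ 2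
        + ‖w‖ ^ 2 + ‖z ^ 5‖ ^ 2 + ‖(Real.sqrt ε : ℂ) * z‖ ^ 2
        - ‖(1 / 2 : ℂ) * (Real.sqrt (ε₀ * c) : ℂ) * (z ^ 7 - z)‖ ^ 2
        = ε₀ * (‖z‖ ^ 8 + c * (Complex.normSq z * (z ^ 6).re))
          + ‖w‖ ^ 2 + ‖z‖ ^ 10 + ε * ‖z‖ ^ 2 := by
    simp only [norm_mul, mul_pow, Complex.norm_real, Real.norm_eq_abs,
      _root_.sq_abs, hs0, hsc, hse, hz8, hz10]
    have h12 : ‖(1 / 2 : ℂ)‖ ^ 2 = (1 / 4 : ℝ) := by norm_num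
    rw [h12]
    nlinarith [key]
  exact ⟨main, fun h => main.trans h⟩
end
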